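/- Let c ∈ [0,1), 0 ≤ δ ≤ q with q > cδ. Then for any k ≥ 1 and any μ_1, …, μ_k ∈ [0, (1−c)²/(q−cδ)], applying the product of momentum matrices to the noise vector (δ, q)ᵀ gives ‖A(μ_1) A(μ_2) ⋯ A(μ_k) · (δ, q)ᵀ‖ ≤ 2√2·(q−cδ)/(1−c), where A(μ) = [[0, 1−δμ],[−c, 1+c−qμ]] and ‖·‖ is the Euclidean norm on ℝ². -/

import Mathlib

open Matrix Real

noncomputable section

/-- The 2×2 momentum matrix `A(μ) = [[0, 1−δμ], [−c, 1+c−qμ]]`. -/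
def Amat (c δ q μ : ℝ) : Matrix (Fin 2) (Fin 2) ℝ :=
  !![0, 1 - δ * μ; -c, 1 + c - q * μ]

/-- The Euclidean norm on `ℝ²` (vectors indexed by `Fin 2`). -/
def euclNorm2 (v : Fin 2 → ℝ) : ℝ := Real.sqrt (v 0 ^ 2 + v 1 ^ 2)

/-- The inductive invariant: a Lyapunov-type bound on the state `(x, y) = (v 0, v 1)`.
With `u = y - c x`, `w = x - y`, `D = q - cδ`, `r = q - δ`, it says
`r u² + D w² ≤ r D (D + r)` and `u² ≤ D (D + r)`. -/
def MomInv (c δ q : ℝ) (v : Fin 2 → ℝ) : Prop :=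
  (q - δ) * (v 1 - c * v 0) ^ 2 + (q - c * δ) * (v 0 - v 1) ^ 2 ≤
      (q - δ) * (q - c * δ) * ((q - c * δ) + (q - δ)) ∧
  (v 1 - c * v 0) ^ 2 ≤ (q - c * δ) * ((q - c * δ) + (q - δ))

set_option maxHeartbeats 1000000 in
lemma momInv_step (c δ q μ x y : ℝ) (hc0 : 0 ≤ c) (hc1 : c < 1) (hδ : 0 ≤ δ)
    (hδq : δ ≤ q) (hqcδ : c * δ < q) (hμ0 : 0 ≤ μ) (hμ1 : μ ≤ (1 - c) ^ 2 / (q - c * δ))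
    (h1 : (q - δ) * (y - c * x) ^ 2 + (q - c * δ) * (x - y) ^ 2 ≤
      (q - δ) * (q - c * δ) * ((q - c * δ) + (q - δ)))
    (h2 : (y - c * x) ^ 2 ≤ (q - c * δ) * ((q - c * δ) + (q - δ))) :
    (q - δ) * ((-c * x + (1 + c - q * μ) * y) - c * ((1 - δ * μ) * y)) ^ 2 +
        (q - c * δ) * ((1 - δ * μ) * y - (-c * x + (1 + c - q * μ) * y)) ^ 2 ≤
      (q - δ) * (q - c * δ) * ((q - c * δ) + (q - δ)) ∧
    ((-c * x + (1 + c - q * μ) * y) - c * ((1 - δ * μ) * y)) ^ 2 ≤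
      (q - c * δ) * ((q - c * δ) + (q - δ)) := by
  have hc1' : 0 < 1 - c := by linarith
  set D : ℝ := q - c * δ with hDdef
  set r : ℝ := q - δ with hrdef
  have hD : 0 < D := by simp only [hDdef]; linarith
  have hr0 : 0 ≤ r := by simp only [hrdef]; linarith
  have hrD : r ≤ D := by
    simp only [hDdef, hrdef]
    nlinarith [mul_nonneg hδ hc1'.le]
  have hμD : μ * D ≤ (1 - c) ^ 2 := (le_div_iff₀ hD).mp hμ1
  have hμr : μ * r ≤ (1 - c) ^ 2 :=
    le_trans (mul_le_mul_of_nonneg_left hrD hμ0) hμD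
  have hμr0 : 0 ≤ μ * r := mul_nonneg hμ0 hr0
  -- rewrite the new components
  have hu' : (-c * x + (1 + c - q * μ) * y) - c * ((1 - δ * μ) * y)
      = (y - c * x) - μ * D * y := by simp only [hDdef]; ring
  have hv' : (1 - δ * μ) * y - (-c * x + (1 + c - q * μ) * y)
      = c * (x - y) + μ * r * y := by simp only [hrdef]; ring
  rw [hu', hv']
  set u : ℝ := y - c * x with hudef
  set v : ℝ := x - y with hvdef
  -- the three nonnegative certificate terms
  have hA : 0 ≤ c * (μ * r) * ((1 - c) * y - v) ^ 2 :=
    mul_nonneg (mul_nonneg hc0 hμr0) (sq_nonneg _)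
  have hBc : 2 * c * (μ * r) ≤ (1 - c) ^ 2 * (1 + c) := by nlinarith
  have hB : 0 ≤ ((1 - c) ^ 2 * (1 + c) - 2 * c * (μ * r)) * v ^ 2 :=
    mul_nonneg (by linarith) (sq_nonneg _)
  have hE : 0 ≤ (2 * (1 - c) ^ 2 - μ * (D + r)) * (μ * r * y ^ 2) := by
    apply mul_nonneg
    · have hsplit : μ * (D + r) = μ * D + μ * r := by ring
      linarith [hμD, hμr]
    · exact mul_nonneg hμr0 (sq_nonneg y)
  -- the key algebraic identity (uses u + c v = (1-c) y, valid by definition of u, v)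
  have hid : (1 - c) * (r * u ^ 2 + D * v ^ 2 -
        (r * (u - μ * D * y) ^ 2 + D * (c * v + μ * r * y) ^ 2))
      = D * (2 * (c * (μ * r) * ((1 - c) * y - v) ^ 2)
          + ((1 - c) ^ 2 * (1 + c) - 2 * c * (μ * r)) * v ^ 2
          + (1 - c) * ((2 * (1 - c) ^ 2 - μ * (D + r)) * (μ * r * y ^ 2))) := by
    simp only [hudef, hvdef, hDdef, hrdef]; ring
  have hmono : r * (u - μ * D * y) ^ 2 + D * (c * v + μ * r * y) ^ 2
      ≤ r * u ^ 2 + D * v ^ 2 := by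
    have hrhs : 0 ≤ D * (2 * (c * (μ * r) * ((1 - c) * y - v) ^ 2)
          + ((1 - c) ^ 2 * (1 + c) - 2 * c * (μ * r)) * v ^ 2
          + (1 - c) * ((2 * (1 - c) ^ 2 - μ * (D + r)) * (μ * r * y ^ 2))) := by
      apply mul_nonneg hD.le
      have hE' : 0 ≤ (1 - c) * ((2 * (1 - c) ^ 2 - μ * (D + r)) * (μ * r * y ^ 2)) :=
        mul_nonneg hc1'.le hE
      linarith [hA, hB, hE']
    have hnn : 0 ≤ (1 - c) * (r * u ^ 2 + D * v ^ 2 -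
        (r * (u - μ * D * y) ^ 2 + D * (c * v + μ * r * y) ^ 2)) := hid ▸ hrhs
    have := nonneg_of_mul_nonneg_right hnn hc1'
    linarith
  constructor
  · linarith
  · -- second invariant for the new state
    rcases eq_or_lt_of_le hr0 with hr | hr
    · -- r = 0 : then v = 0 and u = (1-c) y
      have e1 : r * u ^ 2 = 0 := by rw [← hr]; ring
      have e3 : r * D * (D + r) = 0 := by rw [← hr]; ring
      have hDv : D * v ^ 2 ≤ 0 := by linarith
      have hv2 : v ^ 2 ≤ 0 := nonpos_of_mul_nonpos_right hDv hD
      have hv0 : v = 0 := by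
        have h0' : v ^ 2 = 0 := le_antisymm hv2 (sq_nonneg v)
        exact pow_eq_zero_iff two_ne_zero |>.mp h0'
      have hxy : x = y := by rw [hvdef] at hv0; linarith
      have huy : u = (1 - c) * y := by rw [hudef, hxy]; ring
      have h2c : μ * D ≤ 2 * (1 - c) := by nlinarith [hμD, hc1']
      have hts : ((1 - c) - μ * D) ^ 2 ≤ (1 - c) ^ 2 := by
        nlinarith [mul_nonneg (mul_nonneg hμ0 hD.le) (sub_nonneg.mpr h2c)]
      have h2' : ((1 - c) * y) ^ 2 ≤ D * (D + r) := by rw [← huy]; exact h2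
      have heq : (u - μ * D * y) ^ 2 = ((1 - c) - μ * D) ^ 2 * y ^ 2 := by
        rw [huy]; ring
      rw [heq]
      calc ((1 - c) - μ * D) ^ 2 * y ^ 2 ≤ (1 - c) ^ 2 * y ^ 2 :=
            mul_le_mul_of_nonneg_right hts (sq_nonneg y)
        _ ≤ D * (D + r) := by nlinarith [h2']
    · -- r > 0
      have hDvp : 0 ≤ D * (c * v + μ * r * y) ^ 2 := mul_nonneg hD.le (sq_nonneg _)
      have hru : r * (u - μ * D * y) ^ 2 ≤ r * (D * (D + r)) := by
        have hassoc : r * (D * (D + r)) = r * D * (D + r) := by ring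
        linarith
      exact (mul_le_mul_iff_right₀ hr).mp hru

set_option maxHeartbeats 1600000 in
lemma momInv_prod (c δ q : ℝ) (hc0 : 0 ≤ c) (hc1 : c < 1) (hδ : 0 ≤ δ) (hδq : δ ≤ q)
    (hqcδ : c * δ < q) :
    ∀ l : List ℝ, (∀ m ∈ l, 0 ≤ m ∧ m ≤ (1 - c) ^ 2 / (q - c * δ)) →
      MomInv c δ q ((l.map (Amat c δ q)).prod.mulVec ![δ, q]) := by
  intro l
  induction l with
  | nil =>
    intro _
    simp only [List.map_nil, List.prod_nil, Matrix.one_mulVec]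
    constructor
    · apply le_of_eq
      simp only [Matrix.cons_val_zero, Matrix.cons_val_one, Matrix.head_cons]
      ring
    · simp only [Matrix.cons_val_zero, Matrix.cons_val_one, Matrix.head_cons]
      nlinarith [mul_nonneg hδ (by linarith : (0:ℝ) ≤ 1 - c), hδq, hqcδ]
  | cons m t ih =>
    intro h
    have hm := h m List.mem_cons_self
    have ht := ih (fun x hx => h x (List.mem_cons_of_mem m hx))
    rw [List.map_cons, List.prod_cons, ← Matrix.mulVec_mulVec]
    set w : Fin 2 → ℝ := (t.map (Amat c δ q)).prod.mulVec ![δ, q] with hw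
    have h0 : ((Amat c δ q m).mulVec w) 0 = (1 - δ * m) * w 1 := by
      simp [Amat, Matrix.mulVec, dotProduct, Fin.sum_univ_two]
    have h1 : ((Amat c δ q m).mulVec w) 1 = -c * w 0 + (1 + c - q * m) * w 1 := by
      simp [Amat, Matrix.mulVec, dotProduct, Fin.sum_univ_two]
    have key := momInv_step c δ q m (w 0) (w 1) hc0 hc1 hδ hδq hqcδ hm.1 hm.2 ht.1 ht.2
    constructor
    · rw [h0, h1]; exact key.1
    · rw [h0, h1]; exact key.2

set_option maxHeartbeats 1000000 in
lemma momInv_norm (c δ q : ℝ) (hc0 : 0 ≤ c) (hc1 : c < 1) (hδ : 0 ≤ δ) (hδq : δ ≤ q)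
    (hqcδ : c * δ < q) (v : Fin 2 → ℝ) (hv : MomInv c δ q v) :
    euclNorm2 v ≤ 2 * Real.sqrt 2 * (q - c * δ) / (1 - c) := by
  obtain ⟨h1, h2⟩ := hv
  have hc1' : 0 < 1 - c := by linarith
  set D : ℝ := q - c * δ with hDdef
  set r : ℝ := q - δ with hrdef
  set x : ℝ := v 0 with hxdef
  set y : ℝ := v 1 with hydef
  have hD : 0 < D := by simp only [hDdef]; linarith
  have hr0 : 0 ≤ r := by simp only [hrdef]; linarith
  have hrD : r ≤ D := by
    simp only [hDdef, hrdef]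
    nlinarith [mul_nonneg hδ hc1'.le]
  set u : ℝ := y - c * x with hudef
  set w : ℝ := x - y with hwdef
  have hx2 : (1 - c) ^ 2 * x ^ 2 ≤ (D + r) ^ 2 := by
    rcases eq_or_lt_of_le hr0 with hr | hr
    · have e1 : r * u ^ 2 = 0 := by rw [← hr]; ring
      have e3 : r * D * (D + r) = 0 := by rw [← hr]; ring
      have hDw : D * w ^ 2 ≤ 0 := by linarith
      have hw2 : w ^ 2 ≤ 0 := nonpos_of_mul_nonpos_right hDw hD
      have hw0 : w = 0 := by
        have h0' : w ^ 2 = 0 := le_antisymm hw2 (sq_nonneg w)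
        exact pow_eq_zero_iff two_ne_zero |>.mp h0'
      have hxy : x = y := by rw [hwdef] at hw0; linarith
      have hux : (1 - c) * x = u := by rw [hudef, ← hxy]; ring
      have hxx : ((1 - c) * x) ^ 2 ≤ D * (D + r) := by rw [hux]; exact h2
      have hDr2 : D * (D + r) ≤ (D + r) ^ 2 := by nlinarith [hr0, hD]
      calc (1 - c) ^ 2 * x ^ 2 = ((1 - c) * x) ^ 2 := by ring
        _ ≤ D * (D + r) := hxx
        _ ≤ (D + r) ^ 2 := hDr2
    · have hL1 : (D + r) * (r * u ^ 2 + D * w ^ 2) - r * D * (u + w) ^ 2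
          = (D * w - r * u) ^ 2 := by ring
      have h3 : (D + r) * (r * u ^ 2 + D * w ^ 2) ≤ (D + r) * (r * D * (D + r)) :=
        mul_le_mul_of_nonneg_left h1 (by linarith)
      have huw : u + w = (1 - c) * x := by rw [hudef, hwdef]; ring
      have h5 : (r * D) * ((1 - c) * x) ^ 2 ≤ (r * D) * (D + r) ^ 2 := by
        rw [← huw]
        linarith [sq_nonneg (D * w - r * u)]
      have h6 := (mul_le_mul_iff_right₀ (mul_pos hr hD)).mp h5
      calc (1 - c) ^ 2 * x ^ 2 = ((1 - c) * x) ^ 2 := by ring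
        _ ≤ (D + r) ^ 2 := h6
  have hy2 : (1 - c) ^ 2 * y ^ 2 ≤ (D + r) ^ 2 := by
    rcases eq_or_lt_of_le hr0 with hr | hr
    · have e1 : r * u ^ 2 = 0 := by rw [← hr]; ring
      have e3 : r * D * (D + r) = 0 := by rw [← hr]; ring
      have hDw : D * w ^ 2 ≤ 0 := by linarith
      have hw2 : w ^ 2 ≤ 0 := nonpos_of_mul_nonpos_right hDw hD
      have hw0 : w = 0 := by
        have h0' : w ^ 2 = 0 := le_antisymm hw2 (sq_nonneg w)
        exact pow_eq_zero_iff two_ne_zero |>.mp h0'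
      have hxy : x = y := by rw [hwdef] at hw0; linarith
      have huy : (1 - c) * y = u := by rw [hudef, hxy]; ring
      have hyy : ((1 - c) * y) ^ 2 ≤ D * (D + r) := by rw [huy]; exact h2
      have hDr2 : D * (D + r) ≤ (D + r) ^ 2 := by nlinarith [hr0, hD]
      calc (1 - c) ^ 2 * y ^ 2 = ((1 - c) * y) ^ 2 := by ring
        _ ≤ D * (D + r) := hyy
        _ ≤ (D + r) ^ 2 := hDr2
    · have hL2 : (D + r) * (r * u ^ 2 + D * w ^ 2) - r * D * (u + c * w) ^ 2
          = (r * u - c * D * w) ^ 2 + (1 - c ^ 2) * (D * ((D + r) * w ^ 2)) := by ring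
      have hterm : 0 ≤ (1 - c ^ 2) * (D * ((D + r) * w ^ 2)) := by
        apply mul_nonneg (by nlinarith)
        exact mul_nonneg hD.le (mul_nonneg (by linarith) (sq_nonneg w))
      have h3 : (D + r) * (r * u ^ 2 + D * w ^ 2) ≤ (D + r) * (r * D * (D + r)) :=
        mul_le_mul_of_nonneg_left h1 (by linarith)
      have huw : u + c * w = (1 - c) * y := by rw [hudef, hwdef]; ring
      have h5 : (r * D) * ((1 - c) * y) ^ 2 ≤ (r * D) * (D + r) ^ 2 := by
        rw [← huw]
        linarith [sq_nonneg (r * u - c * D * w)]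
      have h6 := (mul_le_mul_iff_right₀ (mul_pos hr hD)).mp h5
      calc (1 - c) ^ 2 * y ^ 2 = ((1 - c) * y) ^ 2 := by ring
        _ ≤ (D + r) ^ 2 := h6
  have hsum : x ^ 2 + y ^ 2 ≤ 8 * D ^ 2 / (1 - c) ^ 2 := by
    rw [le_div_iff₀ (pow_pos hc1' 2)]
    have hDr : (D + r) ^ 2 ≤ 4 * D ^ 2 := by nlinarith
    nlinarith [hx2, hy2, hDr]
  have hB : 0 ≤ 2 * Real.sqrt 2 * D / (1 - c) := by
    apply div_nonneg _ hc1'.le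
    have h2nn := Real.sqrt_nonneg 2
    positivity
  have hBsq : (2 * Real.sqrt 2 * D / (1 - c)) ^ 2 = 8 * D ^ 2 / (1 - c) ^ 2 := by
    rw [div_pow]
    congr 1
    have hs : Real.sqrt 2 ^ 2 = 2 := Real.sq_sqrt (by norm_num)
    rw [mul_pow, mul_pow, hs]
    ring
  rw [euclNorm2]
  calc Real.sqrt (v 0 ^ 2 + v 1 ^ 2) ≤ Real.sqrt ((2 * Real.sqrt 2 * D / (1 - c)) ^ 2) := by
        apply Real.sqrt_le_sqrt
        rw [hBsq]
        exact hsum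
    _ = 2 * Real.sqrt 2 * D / (1 - c) := Real.sqrt_sq hB

/-- For `c ∈ [0,1)`, `0 ≤ δ ≤ q` with `q > cδ`, any `k ≥ 1` and any
`μ_1, …, μ_k ∈ [0, (1−c)²/(q−cδ)]`,
`‖A(μ_1) ⋯ A(μ_k) · (δ, q)ᵀ‖ ≤ 2√2·(q−cδ)/(1−c)`. -/
theorem momentum_matrix_product_noise_vector_bound
    (c δ q : ℝ) (hc0 : 0 ≤ c) (hc1 : c < 1) (hδ : 0 ≤ δ) (hδq : δ ≤ q) (hqcδ : c * δ < q)
    (k : ℕ) (hk : 1 ≤ k) (μ : Fin k → ℝ)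
    (hμ : ∀ i, 0 ≤ μ i ∧ μ i ≤ (1 - c) ^ 2 / (q - c * δ)) :
    euclNorm2 ((List.ofFn fun i : Fin k => Amat c δ q (μ i)).prod.mulVec ![δ, q]) ≤
      2 * Real.sqrt 2 * (q - c * δ) / (1 - c) := by
  have hofn : (List.ofFn fun i : Fin k => Amat c δ q (μ i))
      = (List.ofFn μ).map (Amat c δ q) := by
    rw [List.map_ofFn]; rfl
  rw [hofn]
  apply momInv_norm c δ q hc0 hc1 hδ hδq hqcδ
  apply momInv_prod c δ q hc0 hc1 hδ hδq hqcδ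
  intro m hm
  rw [List.mem_ofFn] at hm
  obtain ⟨i, rfl⟩ := hm
  exact hμ i

end
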